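/- Let H be a simple hypergraph on vertex set {x_1,…,x_n} (no edge contains another), let I = I(H) be its edge ideal in R = k[x_1,…,x_n], let F be a good leaf of H, and let f = ∏_{x ∈ F} x be the monomial associated with F. Then the integral closures of powers satisfy \overline{I^{t+1}} : f = \overline{I^t} for all t ≥ 1. -/

import Mathlib

open MvPolynomial

/-- The depth of the `R`-module `M` with respect to the ideal `J`: the supremum of
lengths of `M`-regular sequences consisting of elements of `J`. -/
noncomputable def idealDepth {R : Type*} [CommRing R] (J : Ideal R)
    (M : Type*) [AddCommGroup M] [Module R M] : ℕ :=
  sSup {d : ℕ | ∃ rs : List R, rs.length = d ∧ (∀ r ∈ rs, r ∈ J) ∧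
    RingTheory.Sequence.IsRegular M rs}

/-- The irrelevant maximal homogeneous ideal `(x₁, …, xₙ)` of the polynomial ring. -/
noncomputable def mxIdeal (k : Type*) [Field k] (n : ℕ) : Ideal (MvPolynomial (Fin n) k) :=
  Ideal.span (Set.range MvPolynomial.X)

/-- `depth R/I`, the depth of the quotient module with respect to the maximal
homogeneous ideal. -/
noncomputable def pdepth {k : Type*} [Field k] {n : ℕ}
    (I : Ideal (MvPolynomial (Fin n) k)) : ℕ :=
  idealDepth (mxIdeal k n) (MvPolynomial (Fin n) k ⧸ I)

/-- `p` is homogeneous of degree `d ∈ ℤ` (where `0` is homogeneous of any degree). -/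
def HomogOfDeg {k : Type*} [Field k] {n : ℕ} (p : MvPolynomial (Fin n) k) (d : ℤ) : Prop :=
  p = 0 ∨ ∃ m : ℕ, (m : ℤ) = d ∧ p.IsHomogeneous m

/-- A finite graded free resolution of `R/I`: free modules `Fᵢ = ⊕_j R(-D i j)` (of rank
`b i`, zero for `i > len`), differentials given by matrices `A i : Fᵢ₊₁ → Fᵢ` whose entries
are homogeneous of the appropriate degrees, and an augmentation `F₀ → R/I` given by the
homogeneous column `v`, the whole complex being exact. -/
structure GradedFreeRes {k : Type*} [Field k] {n : ℕ}
    (I : Ideal (MvPolynomial (Fin n) k)) where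
  len : ℕ
  b : ℕ → ℕ
  hb : ∀ i : ℕ, len < i → b i = 0
  D : (i : ℕ) → Fin (b i) → ℤ
  A : (i : ℕ) → Matrix (Fin (b i)) (Fin (b (i+1))) (MvPolynomial (Fin n) k)
  v : Fin (b 0) → MvPolynomial (Fin n) k
  hv : ∀ r, HomogOfDeg (v r) (D 0 r)
  hA : ∀ (i : ℕ) r c, HomogOfDeg (A i r c) (D (i+1) c - D i r)
  haug : Function.Surjective
    (fun w : Fin (b 0) → MvPolynomial (Fin n) k => Ideal.Quotient.mk I (∑ r, w r * v r))
  hex0 : Function.Exact ((A 0).mulVec)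
    (fun w : Fin (b 0) → MvPolynomial (Fin n) k => Ideal.Quotient.mk I (∑ r, w r * v r))
  hex : ∀ i : ℕ, Function.Exact ((A (i+1)).mulVec) ((A i).mulVec)

/-- The Castelnuovo–Mumford regularity `reg R/I`: the least `r` such that some finite
graded free resolution of `R/I` has all its `i`-th twists `≤ r + i`; equivalently (via the
minimal free resolution) `reg R/I = max { j - i : β_{i,j}(R/I) ≠ 0 }`. -/
noncomputable def regQuot {k : Type*} [Field k] {n : ℕ}
    (I : Ideal (MvPolynomial (Fin n) k)) : ℤ :=
  sInf {r : ℤ | ∃ F : GradedFreeRes I, ∀ (i : ℕ) (j : Fin (F.b i)), F.D i j - (i : ℤ) ≤ r}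

/-- The regularity of a (nonzero) homogeneous ideal: `reg I = reg R/I + 1`. -/
noncomputable def regIdeal {k : Type*} [Field k] {n : ℕ}
    (I : Ideal (MvPolynomial (Fin n) k)) : ℤ :=
  regQuot I + 1

/-- An ideal is homogeneous if it is generated by homogeneous polynomials. -/
def IsHomogeneousIdeal {k : Type*} [Field k] {n : ℕ}
    (I : Ideal (MvPolynomial (Fin n) k)) : Prop :=
  ∃ T : Set (MvPolynomial (Fin n) k), (∀ p ∈ T, ∃ d : ℕ, p.IsHomogeneous d) ∧ I = Ideal.span T

/-- A monomial ideal: an ideal generated by monomials. -/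
def IsMonomialIdeal {k : Type*} [Field k] {n : ℕ}
    (I : Ideal (MvPolynomial (Fin n) k)) : Prop :=
  ∃ T : Set (Fin n →₀ ℕ), I = Ideal.span ((fun m => monomial m (1 : k)) '' T)


/-- The edge ideal `I(H)` of the hypergraph on vertices `x_1, …, x_n` with edge set `E`. -/
noncomputable def edgeIdealH (k : Type*) [Field k] {n : ℕ} (E : Set (Finset (Fin n))) :
    Ideal (MvPolynomial (Fin n) k) :=
  Ideal.span ((fun F => ∏ i ∈ F, MvPolynomial.X i) '' E)

/-- `F` is a good leaf of the hypergraph with edge set `E`: `F` is an edge and the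
intersections of `F` with the other edges form a chain with respect to containment. -/
def IsGoodLeaf {n : ℕ} (E : Set (Finset (Fin n))) (F : Finset (Fin n)) : Prop :=
  F ∈ E ∧ ∀ G₁ ∈ E, ∀ G₂ ∈ E, G₁ ≠ F → G₂ ≠ F → (G₁ ∩ F ⊆ G₂ ∩ F ∨ G₂ ∩ F ⊆ G₁ ∩ F)

/-- The integral closure `\overline{J}` of an ideal `J`: generated by (in fact equal to the
set of) all `r` satisfying an equation of integral dependence
`r^m + a₁ r^(m-1) + ⋯ + a_m = 0` with `aᵢ ∈ J^i`. -/
noncomputable def intClos {R : Type*} [CommRing R] (J : Ideal R) : Ideal R :=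
  Ideal.span {r : R | ∃ m : ℕ, 0 < m ∧ ∃ a : ℕ → R,
    (∀ i : ℕ, 1 ≤ i → i ≤ m → a i ∈ J ^ i) ∧
    r ^ m + ∑ i ∈ Finset.Icc 1 m, a i * r ^ (m - i) = 0}

namespace GLP


variable {k : Type*} [Field k] {n : ℕ}

/-- exponent vector of an edge -/
noncomputable def eS {n : ℕ} (G : Finset (Fin n)) : Fin n →₀ ℕ := ∑ i ∈ G, Finsupp.single i 1

lemma eS_apply (G : Finset (Fin n)) (x : Fin n) : eS G x = if x ∈ G then 1 else 0 := by
  classical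
  simp only [eS, Finsupp.finset_sum_apply, Finsupp.single_apply]
  rw [Finset.sum_ite_eq' G x (fun _ => 1)]

lemma prod_X_eq (G : Finset (Fin n)) :
    (∏ i ∈ G, (X i : MvPolynomial (Fin n) k)) = monomial (eS G) 1 := by
  classical
  induction G using Finset.cons_induction with
  | empty => simp [eS]
  | cons a s ha ih =>
      rw [Finset.prod_cons, ih, X]
      rw [monomial_mul, one_mul]
      congr 1
      rw [eS, eS, Finset.sum_cons]

/-- a certificate: `d` is the exponent sum of `N` edges from `E`. -/
def Cert (E : Set (Finset (Fin n))) (N : ℕ) (d : Fin n →₀ ℕ) : Prop :=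
  ∃ s : Multiset (Finset (Fin n)), Multiset.card s = N ∧ (∀ G ∈ s, G ∈ E) ∧
    (s.map eS).sum = d

lemma pow_eq (E : Set (Finset (Fin n))) (N : ℕ) :
    (edgeIdealH k E) ^ N =
      Ideal.span ((fun d => monomial d (1:k)) '' {d | Cert E N d}) := by
  classical
  induction N with
  | zero =>
      rw [pow_zero, Ideal.one_eq_top]
      have h0 : (0 : Fin n →₀ ℕ) ∈ {d | Cert E 0 d} := ⟨0, by simp⟩
      apply le_antisymm _ le_top
      intro x _
      have : (monomial (0 : Fin n →₀ ℕ) (1:k)) ∈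
          Ideal.span ((fun d => monomial d (1:k)) '' {d | Cert E 0 d}) :=
        Ideal.subset_span ⟨0, h0, rfl⟩
      simpa [monomial_zero'] using Ideal.mul_mem_left _ x this
  | succ N ih =>
      rw [pow_succ, ih, edgeIdealH]
      rw [Ideal.span_mul_span']
      congr 1
      ext p
      constructor
      · rintro ⟨a, ⟨d, hd, rfl⟩, b, ⟨G, hG, rfl⟩, rfl⟩
        obtain ⟨s, hcard, hmem, hsum⟩ := hd
        refine ⟨d + eS G, ⟨G ::ₘ s, by simp [hcard], ?_, by simp [hsum, add_comm]⟩, ?_⟩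
        · intro G' hG'
          rcases Multiset.mem_cons.1 hG' with h | h
          · exact h ▸ hG
          · exact hmem G' h
        · simp [prod_X_eq, monomial_mul]
      · rintro ⟨d, hd, rfl⟩
        obtain ⟨s, hcard, hmem, hsum⟩ := hd
        obtain ⟨G, hG⟩ := Multiset.card_pos_iff_exists_mem.1 (by rw [hcard]; omega)
        obtain ⟨s', rfl⟩ := Multiset.exists_cons_of_mem hG
        refine ⟨monomial ((s'.map eS).sum) 1, ⟨(s'.map eS).sum,
          ⟨s', by simpa using hcard, fun G' h => hmem G' (Multiset.mem_cons_of_mem h), rfl⟩, rfl⟩,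
          ∏ i ∈ G, X i, ⟨G, hmem G (Multiset.mem_cons_self G s'), rfl⟩, ?_⟩
        show (monomial ((Multiset.map eS s').sum) (1:k)) * (∏ i ∈ G, X i) = monomial d 1
        rw [prod_X_eq, monomial_mul, mul_one]
        rw [← hsum]
        simp [add_comm]

lemma mono_span_support {T : Set (Fin n →₀ ℕ)} {p : MvPolynomial (Fin n) k}
    (hp : p ∈ Ideal.span ((fun d => monomial d (1:k)) '' T)) :
    ∀ b ∈ p.support, ∃ d ∈ T, d ≤ b := by
  classical
  refine Submodule.span_induction ?_ ?_ ?_ ?_ hp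
  · rintro x ⟨d, hd, rfl⟩ b hb
    rw [support_monomial] at hb
    simp only [if_neg (one_ne_zero (α := k)), Finset.mem_singleton] at hb
    exact ⟨d, hd, le_of_eq hb.symm⟩
  · intro b hb; simp at hb
  · intro x y _ _ hx hy b hb
    rcases Finset.mem_union.1 (MvPolynomial.support_add hb) with h | h
    · exact hx b h
    · exact hy b h
  · intro q x _ hx b hb
    have := MvPolynomial.support_mul q x hb
    rw [Finset.mem_add] at this
    obtain ⟨u, hu, v, hv, rfl⟩ := this
    obtain ⟨d, hd, hdv⟩ := hx v hv
    exact ⟨d, hd, le_trans hdv (by simp [Finsupp.le_def, add_comm])⟩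

lemma mono_mem_span {T : Set (Fin n →₀ ℕ)} {d b : Fin n →₀ ℕ} (hd : d ∈ T) (hle : d ≤ b) (c : k) :
    monomial b c ∈ Ideal.span ((fun d => monomial d (1:k)) '' T) := by
  have : monomial b c = monomial (b - d) c * monomial d 1 := by
    rw [monomial_mul, mul_one, tsub_add_cancel_of_le hle]
  rw [this]
  exact Ideal.mul_mem_left _ _ (Ideal.subset_span ⟨d, hd, rfl⟩)



variable {k : Type*} [Field k] {n : ℕ}

lemma supp_pow_lex {g : MvPolynomial (Fin n) k} {b : Fin n →₀ ℕ}
    (hmin : ∀ c ∈ g.support, toLex b ≤ toLex c) (N : ℕ) :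
    ∀ v ∈ (g ^ N).support, toLex (N • b) ≤ toLex v := by
  classical
  induction N with
  | zero =>
      intro v hv
      rw [pow_zero] at hv
      have hv' := MvPolynomial.mem_support_iff.1 hv
      rw [MvPolynomial.coeff_one] at hv'
      have : v = 0 := by
        by_contra h
        rw [if_neg (fun h' => h h'.symm)] at hv'
        exact hv' rfl
      simp [this, zero_nsmul]
  | succ N ih =>
      intro v hv
      rw [pow_succ] at hv
      obtain ⟨u, hu, w, hw, rfl⟩ := Finset.mem_add.1 (MvPolynomial.support_mul _ _ hv)
      have h1 := ih u hu
      have h2 := hmin w hw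
      calc toLex ((N + 1) • b) = toLex (N • b) + toLex b := by
            rw [succ_nsmul]; rfl
        _ ≤ toLex u + toLex w := add_le_add h1 h2
        _ = toLex (u + w) := rfl

lemma coeff_pow_lexmin {g : MvPolynomial (Fin n) k} {b : Fin n →₀ ℕ}
    (hmin : ∀ c ∈ g.support, toLex b ≤ toLex c) (N : ℕ) :
    coeff (N • b) (g ^ N) = coeff b g ^ N := by
  classical
  induction N with
  | zero => simp [coeff_one]
  | succ N ih =>
      rw [pow_succ, MvPolynomial.coeff_mul]
      rw [Finset.sum_eq_single_of_mem (N • b, b) ?_ ?_]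
      · rw [ih, pow_succ]
      · rw [Finset.HasAntidiagonal.mem_antidiagonal, ← succ_nsmul]
      · rintro ⟨u, w⟩ hmem hne
        rw [Finset.HasAntidiagonal.mem_antidiagonal] at hmem
        by_cases hu : u ∈ (g ^ N).support
        · by_cases hw : w ∈ g.support
          · exfalso
            have h1 : toLex (N • b) ≤ toLex u := supp_pow_lex hmin N u hu
            have h2 : toLex b ≤ toLex w := hmin w hw
            have hsum : toLex u + toLex w = toLex (N • b) + toLex b := by
              have : toLex (u + w) = toLex ((N + 1) • b) := by rw [hmem]
              rw [succ_nsmul] at this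
              exact this
            have hu' : toLex u = toLex (N • b) := by
              by_contra h
              have : toLex (N • b) + toLex b < toLex u + toLex w :=
                add_lt_add_of_lt_of_le (lt_of_le_of_ne h1 (Ne.symm h)) h2
              rw [hsum] at this
              exact lt_irrefl _ this
            have huu : u = N • b := toLex.injective hu'
            have hww : w = b := by
              subst huu
              have h3 : N • b + w = (N + 1) • b := hmem
              rw [succ_nsmul] at h3
              exact add_left_cancel h3
            exact hne (by rw [huu, hww])
          · rw [MvPolynomial.notMem_support_iff.1 hw, mul_zero]
        · rw [MvPolynomial.notMem_support_iff.1 hu, zero_mul]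

variable {R : Type*} [CommRing R]

lemma pow_mem_W {J : Ideal R} {r : R} {m : ℕ} (hm : 0 < m) {a : ℕ → R}
    (ha : ∀ i : ℕ, 1 ≤ i → i ≤ m → a i ∈ J ^ i)
    (heq : r ^ m + ∑ i ∈ Finset.Icc 1 m, a i * r ^ (m - i) = 0) :
    ∀ N, r ^ N ∈ ∑ i ∈ Finset.range m, J ^ (N - i) * Ideal.span {r ^ i} := by
  have single_le : ∀ (N i : ℕ), i ∈ Finset.range m →
      J ^ (N - i) * Ideal.span {r ^ i} ≤
        ∑ i ∈ Finset.range m, J ^ (N - i) * Ideal.span {r ^ i} := by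
    intro N i hi
    exact Finset.single_le_sum (f := fun i => J ^ (N - i) * Ideal.span {r ^ i})
      (fun _ _ => bot_le) hi
  have sum_le : ∀ {ι : Type} {s : Finset ι} {f : ι → Ideal R} {K : Ideal R},
      (∀ i ∈ s, f i ≤ K) → ∑ i ∈ s, f i ≤ K := by
    intro ι s f K h
    induction s using Finset.cons_induction with
    | empty => simp
    | cons a s ha ih =>
        rw [Finset.sum_cons, Submodule.add_eq_sup]
        exact sup_le (h a (Finset.mem_cons_self a s))
          (ih fun i hi => h i (Finset.mem_cons_of_mem hi))
  have triv : ∀ N, N < m → r ^ N ∈ ∑ i ∈ Finset.range m, J ^ (N - i) * Ideal.span {r ^ i} := by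
    intro N hN
    apply single_le N N (Finset.mem_range.2 hN)
    rw [Nat.sub_self, pow_zero, one_mul]
    exact Ideal.mem_span_singleton_self _
  have base : r ^ m ∈ ∑ i ∈ Finset.range m, J ^ (m - i) * Ideal.span {r ^ i} := by
    have : r ^ m = -∑ i ∈ Finset.Icc 1 m, a i * r ^ (m - i) :=
      eq_neg_of_add_eq_zero_left heq
    rw [this]
    apply Submodule.neg_mem
    apply Submodule.sum_mem
    intro i hi
    rw [Finset.mem_Icc] at hi
    have hmem : a i * r ^ (m - i) ∈ J ^ (m - (m - i)) * Ideal.span {r ^ (m - i)} := by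
      rw [Nat.sub_sub_self hi.2]
      exact Ideal.mul_mem_mul (ha i hi.1 hi.2) (Ideal.mem_span_singleton_self _)
    exact single_le m (m - i) (Finset.mem_range.2 (by omega)) hmem
  intro N
  induction N with
  | zero => exact triv 0 hm
  | succ N ih =>
      by_cases hN : N + 1 < m
      · exact triv _ hN
      · have step : (∑ i ∈ Finset.range m, J ^ (N - i) * Ideal.span {r ^ i}) *
            Ideal.span {r} ≤ ∑ i ∈ Finset.range m, J ^ (N + 1 - i) * Ideal.span {r ^ i} := by
          rw [Finset.sum_mul]
          apply sum_le
          intro i hi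
          rw [Finset.mem_range] at hi
          rw [mul_assoc, Ideal.span_singleton_mul_span_singleton, ← pow_succ]
          by_cases hcase : i + 1 < m
          · have h1 : N - i = N + 1 - (i + 1) := by omega
            rw [h1]
            exact Finset.single_le_sum (f := fun j => J ^ (N + 1 - j) * Ideal.span {r ^ j})
              (fun _ _ => bot_le) (Finset.mem_range.2 hcase)
          · have hieq : i = m - 1 := by omega
            subst hieq
            have hm1 : m - 1 + 1 = m := by omega
            rw [hm1]
            have hr : Ideal.span {r ^ m} ≤
                ∑ j ∈ Finset.range m, J ^ (m - j) * Ideal.span {r ^ j} := by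
              rw [Ideal.span_singleton_le_iff_mem]
              exact base
            calc J ^ (N - (m-1)) * Ideal.span {r ^ m}
                ≤ J ^ (N - (m-1)) * ∑ j ∈ Finset.range m, J ^ (m - j) * Ideal.span {r ^ j} :=
                  Ideal.mul_mono_right hr
              _ = ∑ j ∈ Finset.range m, J ^ (N - (m-1)) * (J ^ (m - j) * Ideal.span {r ^ j}) := by
                  rw [Finset.mul_sum]
              _ ≤ ∑ j ∈ Finset.range m, J ^ (N + 1 - j) * Ideal.span {r ^ j} := by
                  apply Finset.sum_le_sum
                  intro j hj
                  rw [Finset.mem_range] at hj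
                  rw [← mul_assoc, ← pow_add]
                  have h2 : N - (m-1) + (m - j) = N + 1 - j := by omega
                  rw [h2]
        have hmem : r ^ (N + 1) ∈ (∑ i ∈ Finset.range m, J ^ (N - i) * Ideal.span {r ^ i}) *
            Ideal.span {r} := by
          rw [pow_succ]
          exact Ideal.mul_mem_mul ih (Ideal.mem_span_singleton_self r)
        exact step hmem



variable {R : Type*} [CommRing R]

def SJ (J : Ideal R) : Set R :=
  {r : R | ∃ m : ℕ, 0 < m ∧ ∃ a : ℕ → R,
    (∀ i : ℕ, 1 ≤ i → i ≤ m → a i ∈ J ^ i) ∧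
    r ^ m + ∑ i ∈ Finset.Icc 1 m, a i * r ^ (m - i) = 0}

lemma intClos_eq (J : Ideal R) : intClos J = Ideal.span (SJ J) := rfl

/-- members of `J` are in `SJ J`. -/
lemma mem_SJ_of_mem {J : Ideal R} {x : R} (hx : x ∈ J) : x ∈ SJ J :=
  ⟨1, one_pos, fun _ => -x, fun i h1 h2 => by
    have : i = 1 := le_antisymm h2 h1
    subst this
    simpa using Submodule.neg_mem _ hx, by simp⟩

lemma le_intClos (J : Ideal R) : J ≤ intClos J := fun x hx =>
  Ideal.subset_span (mem_SJ_of_mem hx)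

/-- if `f ∈ J'` and `J' * J^t ≤ ...`: specialized: multiplying an `SJ (I^t)` element by
`f ∈ I` gives an `SJ (I^(t+1))` element. -/
lemma f_mul_SJ {I : Ideal R} {f : R} (hf : f ∈ I) {t : ℕ} {r : R}
    (hr : r ∈ SJ (I ^ t)) : f * r ∈ SJ (I ^ (t + 1)) := by
  obtain ⟨m, hm, a, ha, heq⟩ := hr
  refine ⟨m, hm, fun i => f ^ i * a i, fun i h1 h2 => ?_, ?_⟩
  · have h3 : f ^ i ∈ I ^ i := Ideal.pow_mem_pow hf i
    have h4 : f ^ i * a i ∈ I ^ i * (I ^ t) ^ i := Ideal.mul_mem_mul h3 (ha i h1 h2)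
    have h5 : I ^ i * (I ^ t) ^ i = (I ^ (t + 1)) ^ i := by
      rw [← pow_mul, ← pow_add, ← pow_mul]
      ring_nf
    rwa [h5] at h4
  · have key : ∀ i ∈ Finset.Icc 1 m, f ^ i * a i * (f * r) ^ (m - i) =
        f ^ m * (a i * r ^ (m - i)) := by
      intro i hi
      rw [Finset.mem_Icc] at hi
      rw [mul_pow, ← mul_assoc, mul_comm (f ^ i) (a i), mul_assoc (a i), ← pow_add]
      have : i + (m - i) = m := by omega
      rw [this]
      ring
    rw [Finset.sum_congr rfl key, mul_pow, ← Finset.mul_sum, ← mul_add, heq, mul_zero]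

variable {k : Type*} [Field k] {n : ℕ}

lemma SJ_good {J : Ideal (MvPolynomial (Fin n) k)} {w : Fin n →₀ ℕ}
    (hw : ∀ j : ℕ, monomial (j • w) (1 : k) ∈ J ^ j) {r : MvPolynomial (Fin n) k}
    (hr : r ∈ SJ J) : ∃ δ, ∀ N, monomial δ (1 : k) * r ^ N ∈ J ^ N := by
  obtain ⟨m, hm, a, ha, heq⟩ := hr
  refine ⟨(m - 1) • w, fun N => ?_⟩
  have hrN := pow_mem_W hm ha heq N
  have hc : monomial ((m-1) • w) (1:k) * r ^ N ∈
      Ideal.span {monomial ((m-1) • w) (1:k)} *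
        ∑ i ∈ Finset.range m, J ^ (N - i) * Ideal.span {r ^ i} :=
    Ideal.mul_mem_mul (Ideal.mem_span_singleton_self _) hrN
  have hle : Ideal.span {monomial ((m-1) • w) (1:k)} *
      ∑ i ∈ Finset.range m, J ^ (N - i) * Ideal.span {r ^ i} ≤ J ^ N := by
    rw [Finset.mul_sum]
    have sum_le : ∀ {ι : Type} {s : Finset ι} {f : ι → Ideal (MvPolynomial (Fin n) k)}
        {K : Ideal (MvPolynomial (Fin n) k)},
        (∀ i ∈ s, f i ≤ K) → ∑ i ∈ s, f i ≤ K := by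
      intro ι s f K h
      induction s using Finset.cons_induction with
      | empty => simp
      | cons a s ha ih =>
          rw [Finset.sum_cons, Submodule.add_eq_sup]
          exact sup_le (h a (Finset.mem_cons_self a s))
            (ih fun i hi => h i (Finset.mem_cons_of_mem hi))
    apply sum_le
    intro i hi
    rw [Finset.mem_range] at hi
    have h1 : Ideal.span {monomial ((m-1) • w) (1:k)} ≤ J ^ (m - 1) := by
      rw [Ideal.span_singleton_le_iff_mem]
      exact hw (m - 1)
    calc Ideal.span {monomial ((m-1) • w) (1:k)} * (J ^ (N - i) * Ideal.span {r ^ i})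
        ≤ J ^ (m - 1) * (J ^ (N - i) * ⊤) := by
          apply Ideal.mul_mono h1
          exact Ideal.mul_mono_right le_top
      _ = J ^ (m - 1 + (N - i)) := by rw [Ideal.mul_top, ← pow_add]
      _ ≤ J ^ N := Ideal.pow_le_pow_right (by omega)
  exact hle hc

/-- Key: every element of the integral closure of `J` admits a monomial multiplier
certificate, provided `J` has monomial certificates of its powers. -/
lemma intClos_good {J : Ideal (MvPolynomial (Fin n) k)} {w : Fin n →₀ ℕ}
    (hw : ∀ j : ℕ, monomial (j • w) (1 : k) ∈ J ^ j) {p : MvPolynomial (Fin n) k}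
    (hp : p ∈ intClos J) : ∃ δ, ∀ N, monomial δ (1 : k) * p ^ N ∈ J ^ N := by
  classical
  let G : Ideal (MvPolynomial (Fin n) k) :=
    { carrier := {q | ∃ δ, ∀ N, monomial δ (1 : k) * q ^ N ∈ J ^ N}
      add_mem' := by
        rintro x y ⟨δx, hx⟩ ⟨δy, hy⟩
        refine ⟨δx + δy, fun N => ?_⟩
        rw [add_pow, Finset.mul_sum]
        apply Submodule.sum_mem
        intro i hi
        rw [Finset.mem_range] at hi
        have key : monomial (δx + δy) (1:k) * (x ^ i * y ^ (N - i) * (N.choose i : MvPolynomial (Fin n) k)) =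
            (N.choose i : MvPolynomial (Fin n) k) * ((monomial δx (1:k) * x ^ i) * (monomial δy (1:k) * y ^ (N - i))) := by
          have hmono : (monomial (δx + δy)) (1:k) = monomial δx 1 * monomial δy 1 := by
            rw [monomial_mul, one_mul]
          rw [hmono]
          ring
        rw [key]
        apply Ideal.mul_mem_left
        have := Ideal.mul_mem_mul (hx i) (hy (N - i))
        rw [← pow_add] at this
        have hiN : i + (N - i) = N := by omega
        rwa [hiN] at this
      zero_mem' := by
        refine ⟨0, fun N => ?_⟩
        cases N with
        | zero => simpa using Submodule.mem_top
        | succ N => rw [zero_pow (Nat.succ_ne_zero N), mul_zero]; exact Submodule.zero_mem _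
      smul_mem' := by
        rintro c x ⟨δ, hx⟩
        refine ⟨δ, fun N => ?_⟩
        have : monomial δ (1:k) * (c • x) ^ N = c ^ N * (monomial δ (1:k) * x ^ N) := by
          rw [smul_eq_mul, mul_pow]
          ring
        rw [this]
        exact Ideal.mul_mem_left _ _ (hx N) }
  have hSJ : SJ J ⊆ G := fun r hr => SJ_good hw hr
  have : intClos J ≤ G := by
    rw [intClos_eq]
    exact Ideal.span_le.2 hSJ
  exact this hp


variable {k : Type*} [Field k] {n : ℕ}
open MvPolynomial

lemma finsupp_sum_apply (s : Multiset (Fin n →₀ ℕ)) (x : Fin n) :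
    (s.sum) x = (s.map (fun d => d x)).sum := by
  have := map_multiset_sum (Finsupp.applyAddHom (M := ℕ) x) s
  simpa [Multiset.map_map] using this

lemma removal {E : Set (Finset (Fin n))} {F : Finset (Fin n)} (hF : IsGoodLeaf E F) :
    ∀ (N : ℕ) (u : Fin n →₀ ℕ) (s : Multiset (Finset (Fin n))),
      (∀ G ∈ s, G ∈ E) → ((s.map eS).sum ≤ u + N • eS F) → N ≤ Multiset.card s →
      ∃ s' : Multiset (Finset (Fin n)), s' ≤ s ∧
        Multiset.card s' = Multiset.card s - N ∧ ((s'.map eS).sum ≤ u) := by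
  classical
  intro N
  induction N with
  | zero =>
      intro u s hmem hsum _
      exact ⟨s, le_refl s, by simp, by simpa using hsum⟩
  | succ N ih =>
      intro u s hmem hsum hcard
      have hne : s ≠ 0 := by
        intro h
        rw [h] at hcard
        simp at hcard
      obtain ⟨G₀, hG₀t, hmax⟩ := Finset.exists_max_image s.toFinset
        (fun G => (G ∩ F).card) (by rwa [Multiset.toFinset_nonempty])
      rw [Multiset.mem_toFinset] at hG₀t
      have hchain : ∀ G ∈ s, G ∩ F ⊆ G₀ ∩ F := by
        intro G hG
        by_cases hG₀F : G₀ = F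
        · subst hG₀F
          rw [Finset.inter_self]
          exact Finset.inter_subset_right
        · by_cases hGF : G = F
          · subst hGF
            have h1 : (G ∩ G).card ≤ (G₀ ∩ G).card := by
              have := hmax G (Multiset.mem_toFinset.2 hG)
              simpa using this
            rw [Finset.inter_self] at h1
            have h2 : G₀ ∩ G = G :=
              Finset.eq_of_subset_of_card_le Finset.inter_subset_right h1
            rw [Finset.inter_self, h2]
          · rcases hF.2 G (hmem G hG) G₀ (hmem G₀ hG₀t) hGF hG₀F with h | h
            · exact h
            · have h1 : (G ∩ F).card ≤ (G₀ ∩ F).card := hmax G (Multiset.mem_toFinset.2 hG)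
              rw [Finset.eq_of_subset_of_card_le h h1]
      obtain ⟨s'', rfl⟩ := Multiset.exists_cons_of_mem hG₀t
      have hmem'' : ∀ G ∈ s'', G ∈ E := fun G hG => hmem G (Multiset.mem_cons_of_mem hG)
      have hsum'' : (s''.map eS).sum ≤ u + N • eS F := by
        rw [Finsupp.le_def]
        intro x
        have hx := Finsupp.le_def.1 hsum x
        rw [Multiset.map_cons, Multiset.sum_cons] at hx
        have hx' : (eS G₀) x + ((s''.map eS).sum) x ≤ u x + (N + 1) * (eS F) x := by
          simpa [Finsupp.add_apply, Finsupp.smul_apply] using hx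
        have goal' : ((s''.map eS).sum) x ≤ u x + N * (eS F) x := by
          have hFx : (eS F) x = if x ∈ F then 1 else 0 := eS_apply F x
          have hGx : (eS G₀) x = if x ∈ G₀ then 1 else 0 := eS_apply G₀ x
          by_cases hxF : x ∈ F
          · by_cases hxG₀ : x ∈ G₀
            · rw [hFx, if_pos hxF] at hx' ⊢
              rw [hGx, if_pos hxG₀] at hx'
              omega
            · have hz : ((s''.map eS).sum) x = 0 := by
                rw [finsupp_sum_apply, Multiset.map_map]
                apply Multiset.sum_eq_zero
                intro a ha
                rw [Multiset.mem_map] at ha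
                obtain ⟨G, hG, rfl⟩ := ha
                simp only [Function.comp_apply]
                rw [eS_apply, if_neg]
                intro hxG
                exact hxG₀ (Finset.mem_of_mem_inter_left
                  (hchain G (Multiset.mem_cons_of_mem hG) (Finset.mem_inter.2 ⟨hxG, hxF⟩)))
              rw [hz]
              exact Nat.zero_le _
          · rw [hFx, if_neg hxF] at hx' ⊢
            omega
        simpa [Finsupp.add_apply, Finsupp.smul_apply] using goal'
      have hcard'' : N ≤ Multiset.card s'' := by
        rw [Multiset.card_cons] at hcard
        omega
      obtain ⟨s', hle, hc, hs⟩ := ih u s'' hmem'' hsum'' hcard''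
      refine ⟨s', le_trans hle (Multiset.le_cons_self s'' G₀), ?_, hs⟩
      rw [Multiset.card_cons, hc]
      omega

lemma count_univ_eq_card {α : Type*} [DecidableEq α] [Fintype α] (s : Multiset α) :
    ∑ a ∈ Finset.univ, s.count a = Multiset.card s := by
  rw [← Multiset.toFinset_sum_count_eq]
  exact (Finset.sum_subset (Finset.subset_univ _) (fun a _ ha =>
    Multiset.count_eq_zero.2 (fun h => ha (Multiset.mem_toFinset.2 h)))).symm

lemma map_eS_sum (s : Multiset (Finset (Fin n))) :
    (s.map eS).sum = ∑ G ∈ Finset.univ, (s.count G) • (eS (n := n) G) := by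
  classical
  induction s using Multiset.induction with
  | empty => simp
  | cons a s ih =>
      rw [Multiset.map_cons, Multiset.sum_cons, ih]
      have hterm : ∀ G ∈ Finset.univ, Multiset.count G (a ::ₘ s) • eS (n := n) G
          = Multiset.count G s • eS G + (if G = a then eS a else 0) := by
        intro G _
        rw [Multiset.count_cons]
        by_cases h : G = a
        · subst h
          rw [if_pos rfl, if_pos rfl, add_smul, one_smul]
        · rw [if_neg h, if_neg h, add_zero, add_zero]
      rw [Finset.sum_congr rfl hterm, Finset.sum_add_distrib,
        Finset.sum_ite_eq' Finset.univ a (fun _ => eS a), if_pos (Finset.mem_univ a), add_comm]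

lemma dickson_cert {E : Set (Finset (Fin n))} {t : ℕ} {δ b : Fin n →₀ ℕ}
    (h : ∀ N : ℕ, ∃ s : Multiset (Finset (Fin n)), Multiset.card s = t * N ∧
      (∀ G ∈ s, G ∈ E) ∧ (s.map eS).sum ≤ δ + N • b) :
    ∃ (M : ℕ) (d : Fin n →₀ ℕ), 0 < M ∧ Cert E (t * M) d ∧ d ≤ M • b := by
  classical
  choose s hcard hmem hsum using h
  set A : ℕ → (Fin n →₀ ℕ) := fun N => ((s N).map eS).sum with hA
  set σ : ℕ → (Fin n →₀ ℕ) := fun N => (δ + N • b) - A N with hσ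
  have hAσ : ∀ N, A N + σ N = δ + N • b := by
    intro N
    rw [hσ]
    exact add_tsub_cancel_of_le (hsum N)
  -- Dickson's lemma
  have hPWO : (Set.univ : Set ((Finset (Fin n)) ⊕ (Fin n) → ℕ)).IsPWO :=
    Set.isPWO_univ_iff.2 inferInstance
  obtain ⟨N, N', hNN', hle⟩ := Set.PartiallyWellOrderedOn.exists_lt hPWO
    (f := fun N => Sum.elim (fun G => (s N).count G) (fun x => σ N x))
    (fun _ => Set.mem_univ _)
  have hcnt : ∀ G, (s N).count G ≤ (s N').count G := fun G => hle (Sum.inl G)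
  have hσle : σ N ≤ σ N' := Finsupp.le_def.2 fun x => hle (Sum.inr x)
  set M := N' - N with hM
  have hM0 : 0 < M := by omega
  set cnt' : Finset (Fin n) → ℕ := fun G => (s N').count G - (s N).count G with hcnt'
  set s' : Multiset (Finset (Fin n)) :=
    ∑ G ∈ Finset.univ, Multiset.replicate (cnt' G) G with hs'
  have hcnt'apply : ∀ G, cnt' G = (s N').count G - (s N).count G := fun _ => rfl
  have hcount' : ∀ H, s'.count H = cnt' H := by
    intro H
    rw [hs', Multiset.count_sum']
    rw [Finset.sum_eq_single H]
    · simp [Multiset.count_replicate]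
    · intro G _ hne
      simp [Multiset.count_replicate, hne, Ne.symm hne]
    · intro hH
      exact absurd (Finset.mem_univ H) hH
  have hmem' : ∀ G ∈ s', G ∈ E := by
    intro G hG
    have h0 : 0 < s'.count G := Multiset.count_pos.2 hG
    rw [hcount', hcnt'apply] at h0
    exact hmem N' G (Multiset.count_pos.1 (by omega))
  have hMsum : t * N + t * M = t * N' := by
    rw [hM, ← Nat.mul_add]
    congr 1
    omega
  have hcards' : Multiset.card s' = t * M := by
    rw [← count_univ_eq_card]
    have h1 : ∑ G ∈ Finset.univ, s'.count G
        = ∑ G ∈ Finset.univ, ((s N').count G - (s N).count G) :=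
      Finset.sum_congr rfl fun G _ => (hcount' G).trans (hcnt'apply G)
    rw [h1]
    have h2 : ∑ G ∈ Finset.univ, ((s N').count G - (s N).count G)
        + ∑ G ∈ Finset.univ, (s N).count G = ∑ G ∈ Finset.univ, (s N').count G := by
      rw [← Finset.sum_add_distrib]
      exact Finset.sum_congr rfl fun G _ => tsub_add_cancel_of_le (hcnt G)
    rw [count_univ_eq_card, count_univ_eq_card] at h2
    rw [hcard N, hcard N'] at h2
    omega
  set d : Fin n →₀ ℕ := (s'.map eS).sum with hd
  have hAK : ∀ K, A K = ∑ G ∈ Finset.univ, ((s K).count G) • eS (n := n) G :=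
    fun K => map_eS_sum (s K)
  have hAd : d + A N = A N' := by
    rw [hd, map_eS_sum, hAK N, hAK N', ← Finset.sum_add_distrib]
    apply Finset.sum_congr rfl
    intro G _
    rw [hcount', hcnt'apply, ← add_smul, tsub_add_cancel_of_le (hcnt G)]
  have hkey : d + (σ N' - σ N) = M • b := by
    ext x
    have h1 : d x + (A N) x = (A N') x := by rw [← Finsupp.add_apply, hAd]
    have h2 : (σ N) x ≤ (σ N') x := Finsupp.le_def.1 hσle x
    have h3 : (A N) x + (σ N) x = δ x + N * b x := by
      have := hAσ N
      have h4 := congrArg (fun v => v x) this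
      simpa [Finsupp.add_apply, Finsupp.smul_apply] using h4
    have h5 : (A N') x + (σ N') x = δ x + N' * b x := by
      have := hAσ N'
      have h4 := congrArg (fun v => v x) this
      simpa [Finsupp.add_apply, Finsupp.smul_apply] using h4
    have h6 : N' * b x = N * b x + M * b x := by
      rw [show N' = N + M by omega, Nat.add_mul]
    simp only [Finsupp.add_apply, Finsupp.tsub_apply, Finsupp.smul_apply, smul_eq_mul]
    omega
  refine ⟨M, d, hM0, ⟨s', hcards', hmem', rfl⟩, ?_⟩
  calc d ≤ d + (σ N' - σ N) := self_le_add_right _ _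
    _ = M • b := hkey

lemma step {E : Set (Finset (Fin n))} {F : Finset (Fin n)} (hF : IsGoodLeaf E F) (t : ℕ) :
    ∀ g : MvPolynomial (Fin n) k,
      (monomial (eS F) (1:k)) * g ∈ intClos ((edgeIdealH k E) ^ (t + 1)) →
      g ∈ intClos ((edgeIdealH k E) ^ t) := by
  classical
  set I : Ideal (MvPolynomial (Fin n) k) := edgeIdealH k E with hIdef
  set fm : MvPolynomial (Fin n) k := monomial (eS F) 1 with hfm
  have hfI : fm ∈ I := by
    rw [hfm, hIdef, edgeIdealH, ← prod_X_eq]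
    exact Ideal.subset_span ⟨F, hF.1, rfl⟩
  have hw : ∀ j : ℕ, monomial (j • ((t+1) • eS F)) (1:k) ∈ (I ^ (t+1)) ^ j := by
    intro j
    have h1 : fm ^ ((t+1) * j) ∈ I ^ ((t+1) * j) := Ideal.pow_mem_pow hfI _
    have h2 : fm ^ ((t+1) * j) = monomial (j • ((t+1) • eS F)) (1:k) := by
      rw [hfm, monomial_pow, one_pow, smul_smul, mul_comm j (t+1)]
    rw [← pow_mul]
    rwa [h2] at h1
  suffices H : ∀ c : ℕ, ∀ g : MvPolynomial (Fin n) k, g.support.card ≤ c →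
      fm * g ∈ intClos (I ^ (t + 1)) → g ∈ intClos (I ^ t) by
    exact fun g hg => H g.support.card g le_rfl hg
  intro c
  induction c with
  | zero =>
      intro g hgc _
      have : g.support = ∅ := Finset.card_eq_zero.1 (Nat.le_zero.1 hgc)
      rw [MvPolynomial.support_eq_empty.1 this]
      exact Submodule.zero_mem _
  | succ c ih =>
      intro g hgc hg
      by_cases hg0 : g = 0
      · rw [hg0]; exact Submodule.zero_mem _
      · obtain ⟨b0, hb0supp, hb0min⟩ := Finset.exists_min_image g.support toLex
          (MvPolynomial.support_nonempty.2 hg0)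
        -- the monomial multiplier certificate
        obtain ⟨δ, hδ⟩ := intClos_good hw hg
        -- certificates for every N
        have hcert : ∀ N : ℕ, ∃ s : Multiset (Finset (Fin n)),
            Multiset.card s = t * N ∧ (∀ G ∈ s, G ∈ E) ∧
            (s.map eS).sum ≤ δ + N • b0 := by
          intro N
          have hmem1 : monomial δ (1:k) * (fm * g) ^ N ∈
              Ideal.span ((fun d => monomial d (1:k)) '' {d | Cert E ((t+1) * N) d}) := by
            rw [← pow_eq, ← hIdef, pow_mul]
            exact hδ N
          have hcoeff : coeff (δ + N • eS F + N • b0) (monomial δ (1:k) * (fm * g) ^ N)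
              = (coeff b0 g) ^ N := by
            rw [mul_pow, hfm, monomial_pow, one_pow, ← mul_assoc]
            have hmm : (monomial δ (1:k)) * monomial (N • eS F) 1
                = monomial (δ + N • eS F) (1:k) := by
              rw [monomial_mul, mul_one]
            rw [hmm, coeff_monomial_mul, one_mul]
            exact coeff_pow_lexmin hb0min N
          have hsupp : δ + N • eS F + N • b0 ∈
              (monomial δ (1:k) * (fm * g) ^ N).support := by
            rw [MvPolynomial.mem_support_iff, hcoeff]
            exact pow_ne_zero _ (MvPolynomial.mem_support_iff.1 hb0supp)
          obtain ⟨d, hd, hdle⟩ := mono_span_support hmem1 _ hsupp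
          obtain ⟨s, hscard, hsmem, hssum⟩ := hd
          have hdle' : d ≤ (δ + N • b0) + N • eS F := by
            rwa [add_right_comm] at hdle
          have hNcard : N ≤ Multiset.card s := by
            rw [hscard]
            have h3 : (t+1) * N = t * N + N := by ring
            omega
          obtain ⟨s', hs'le, hs'card, hs'sum⟩ :=
            removal hF N ((δ + N • b0)) s hsmem (by rw [hssum]; exact hdle') hNcard
          refine ⟨s', ?_, fun G hG => hsmem G (Multiset.mem_of_le hs'le hG), hs'sum⟩
          rw [hs'card, hscard]
          have h3 : (t+1) * N = t * N + N := by ring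
          omega
        obtain ⟨M, d, hM0, hdCert, hdle⟩ := dickson_cert hcert
        -- the monomial x^{b0} is integral over I^t
        have hmon : monomial (M • b0) (1:k) ∈ (I ^ t) ^ M := by
          rw [← pow_mul, pow_eq]
          exact mono_mem_span hdCert hdle 1
        have hρ : monomial b0 (1:k) ∈ SJ (I ^ t) := by
          refine ⟨M, hM0, fun i => if i = M then -(monomial (M • b0) (1:k)) else 0,
            fun i h1 h2 => ?_, ?_⟩
          · show (if i = M then -(monomial (M • b0) (1:k)) else 0) ∈ (I ^ t) ^ i
            by_cases hiM : i = M
            · subst hiM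
              rw [if_pos rfl]
              exact Submodule.neg_mem _ hmon
            · rw [if_neg hiM]
              exact Submodule.zero_mem _
          · rw [Finset.sum_eq_single_of_mem M (Finset.mem_Icc.2 ⟨hM0, le_refl M⟩)]
            · show monomial b0 (1:k) ^ M +
                (if M = M then -(monomial (M • b0) (1:k)) else 0) * monomial b0 (1:k) ^ (M - M) = 0
              rw [if_pos rfl, Nat.sub_self, pow_zero, mul_one, monomial_pow, one_pow]
              ring
            · intro i _ hiM
              show (if i = M then -(monomial (M • b0) (1:k)) else 0) * monomial b0 (1:k) ^ (M - i) = 0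
              rw [if_neg hiM, zero_mul]
        set cb : k := coeff b0 g with hcb
        have hmonoc : monomial b0 cb ∈ intClos (I ^ t) := by
          have hCmul : monomial b0 cb = C cb * monomial b0 (1:k) := by
            rw [MvPolynomial.C_mul_monomial, mul_one]
          rw [hCmul, intClos_eq]
          exact Ideal.mul_mem_left _ _ (Ideal.subset_span hρ)
        set g' : MvPolynomial (Fin n) k := g - monomial b0 cb with hg'
        have hsupp' : g'.support ⊆ g.support.erase b0 := by
          intro x hx
          rw [MvPolynomial.mem_support_iff] at hx
          rw [hg', MvPolynomial.coeff_sub, MvPolynomial.coeff_monomial] at hx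
          rcases eq_or_ne x b0 with rfl | hne
          · rw [if_pos rfl, hcb, sub_self] at hx
            exact absurd rfl hx
          · rw [Finset.mem_erase]
            refine ⟨hne, MvPolynomial.mem_support_iff.2 ?_⟩
            rw [if_neg (Ne.symm hne), sub_zero] at hx
            exact hx
        have hcard' : g'.support.card ≤ c := by
          have h1 := Finset.card_le_card hsupp'
          have h2 : (g.support.erase b0).card = g.support.card - 1 :=
            Finset.card_erase_of_mem hb0supp
          have h3 : 1 ≤ g.support.card := Finset.card_pos.2 ⟨b0, hb0supp⟩
          omega
        have hfg' : fm * g' ∈ intClos (I ^ (t + 1)) := by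
          rw [hg', mul_sub]
          apply Submodule.sub_mem _ hg
          have h1 : fm * monomial b0 (1:k) ∈ SJ (I ^ (t+1)) := f_mul_SJ hfI hρ
          have h2 : fm * monomial b0 cb = C cb * (fm * monomial b0 (1:k)) := by
            have hCmul : monomial b0 cb = C cb * monomial b0 (1:k) := by
              rw [MvPolynomial.C_mul_monomial, mul_one]
            rw [hCmul]
            ring
          rw [h2, intClos_eq]
          exact Ideal.mul_mem_left _ _ (Ideal.subset_span h1)
        have hgmem' : g' ∈ intClos (I ^ t) := ih g' hcard' hfg'
        have : g = g' + monomial b0 cb := by rw [hg']; ring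
        rw [this]
        exact Submodule.add_mem _ hgmem' hmonoc

end GLP

/-- **Lemma (good leaf colon, integral closures).** Let `I` be the edge ideal of a simple
hypergraph (no edge contains another) with a good leaf `F`, and let `f` be the monomial
associated with `F`. Then `\overline{I^(t+1)} : f = \overline{I^t}` for all `t ≥ 1`. -/
theorem intClos_pow_colon_good_leaf {k : Type*} [Field k] {n : ℕ}
    (E : Set (Finset (Fin n)))
    (hsimple : ∀ F₁ ∈ E, ∀ F₂ ∈ E, F₁ ⊆ F₂ → F₁ = F₂)
    (F : Finset (Fin n)) (hF : IsGoodLeaf E F)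
    (I : Ideal (MvPolynomial (Fin n) k)) (hI : I = edgeIdealH k E)
    (f : MvPolynomial (Fin n) k) (hf : f = ∏ i ∈ F, MvPolynomial.X i) :
    ∀ t : ℕ, 1 ≤ t → (intClos (I ^ (t + 1))).colon (Ideal.span {f}) = intClos (I ^ t) := by
  intro t _
  subst hI hf
  have hfm : (∏ i ∈ F, X i : MvPolynomial (Fin n) k) = monomial (GLP.eS F) 1 := GLP.prod_X_eq F
  have hfI : (monomial (GLP.eS F) (1:k)) ∈ edgeIdealH k E := by
    rw [edgeIdealH, ← GLP.prod_X_eq]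
    exact Ideal.subset_span ⟨F, hF.1, rfl⟩
  apply le_antisymm
  · intro x hx
    have hxf : x * (∏ i ∈ F, X i : MvPolynomial (Fin n) k)
        ∈ intClos ((edgeIdealH k E) ^ (t + 1)) := Ideal.mem_colon_span_singleton.1 hx
    rw [hfm, mul_comm] at hxf
    exact GLP.step hF t x hxf
  · intro x hx
    rw [Ideal.mem_colon_span_singleton, hfm, mul_comm]
    -- show fm * x ∈ intClos (I^(t+1))
    have hmap : intClos ((edgeIdealH k E) ^ t) ≤
        Submodule.comap (LinearMap.mulLeft (MvPolynomial (Fin n) k) (monomial (GLP.eS F) (1:k)))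
          (intClos ((edgeIdealH k E) ^ (t + 1))) := by
      rw [GLP.intClos_eq, Ideal.span_le]
      intro r hr
      have : (monomial (GLP.eS F) (1:k)) * r ∈ GLP.SJ ((edgeIdealH k E) ^ (t + 1)) :=
        GLP.f_mul_SJ hfI hr
      exact Ideal.subset_span this
    exact hmap hx
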